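/- If C_j, j ≥ 1, are closed f-invariant subsets of a compact metric space X (f(C_j) = C_j) on each of which the homeomorphism f is chain transitive, and C_j → B in the Hausdorff distance, then f(B) = B and f|_B is chain transitive. -/

import Mathlib

open Metric Filter Function Set

variable {X : Type*} [MetricSpace X]

/-- A δ-chain of length ≥ 1 from x to y. -/
def IsChain' (f : X → X) (δ : ℝ) (x y : X) : Prop :=
  ∃ k : ℕ, 1 ≤ k ∧ ∃ c : ℕ → X, c 0 = x ∧ c k = y ∧ ∀ i < k, dist (f (c i)) (c (i + 1)) ≤ δ

/-- The chain recurrent set. -/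
def CR (f : X → X) : Set X := {x | ∀ δ > 0, IsChain' f δ x x}

/-- Sensitive points of f restricted to S. -/
def SenOn (f : X → X) (S : Set X) : Set X :=
  {x | x ∈ S ∧ ∃ a > 0, ∀ δ > 0, ∃ y ∈ S, dist x y ≤ δ ∧ ∃ i : ℕ, a < dist (f^[i] x) (f^[i] y)}

/-- Equicontinuity of a map (uniform over all forward iterates). -/
def Equicont (f : X → X) : Prop :=
  ∀ ε > 0, ∃ δ > 0, ∀ z w : X, dist z w ≤ δ → ∀ i : ℕ, dist (f^[i] z) (f^[i] w) ≤ ε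

/-- The i-th iterate (i ∈ ℤ) of a homeomorphism. -/
def ziter (f : X ≃ₜ X) (i : ℤ) : X → X :=
  fun x => if 0 ≤ i then (⇑f)^[i.toNat] x else (⇑f.symm)^[(-i).toNat] x

/-- Expansiveness of a homeomorphism. -/
def Expansive (f : X ≃ₜ X) : Prop :=
  ∃ e > 0, ∀ x y : X, (∀ i : ℤ, dist (ziter f i x) (ziter f i y) ≤ e) → x = y

/-- e is an expansive constant for f on S. -/
def ExpConstOn (f : X ≃ₜ X) (S : Set X) (e : ℝ) : Prop :=
  ∀ x y : X, (∀ i : ℤ, ziter f i x ∈ S) → (∀ i : ℤ, ziter f i y ∈ S) →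
    (∀ i : ℤ, dist (ziter f i x) (ziter f i y) ≤ e) → x = y

/-- Periodic points. -/
def Per (f : X → X) : Set X := {x | ∃ j : ℕ, 1 ≤ j ∧ f^[j] x = x}

/-- Closed r-neighborhood of a set. -/
def nbd (r : ℝ) (S : Set X) : Set X := {y | infDist y S ≤ r}

/-- A δ-chain from x to y lying entirely in S. -/
def ChainIn (f : X → X) (S : Set X) (δ : ℝ) (x y : X) : Prop :=
  ∃ k : ℕ, 1 ≤ k ∧ ∃ c : ℕ → X, c 0 = x ∧ c k = y ∧ (∀ i ≤ k, c i ∈ S) ∧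
    ∀ i < k, dist (f (c i)) (c (i + 1)) ≤ δ

/-- Chain transitivity of f restricted to S. -/
def ChainTransOn (f : X → X) (S : Set X) : Prop :=
  ∀ x ∈ S, ∀ y ∈ S, ∀ δ > 0, ChainIn f S δ x y

theorem stmt_13 [CompactSpace X] (f : X ≃ₜ X) (C : ℕ → Set X) (B : Set X)
    (hCc : ∀ j, IsClosed (C j)) (hCne : ∀ j, (C j).Nonempty)
    (hCinv : ∀ j, ⇑f '' C j = C j) (hCct : ∀ j, ChainTransOn ⇑f (C j))
    (hBc : IsClosed B) (hBne : B.Nonempty)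
    (hlim : Filter.Tendsto (fun j => Metric.hausdorffDist (C j) B) atTop (nhds 0)) :
    ⇑f '' B = B ∧ ChainTransOn ⇑f B := by
  have hbdd : ∀ s : Set X, Bornology.IsBounded s := fun s =>
    isCompact_univ.isBounded.subset (subset_univ s)
  have hfin : ∀ j, EMetric.hausdorffEdist (C j) B ≠ ⊤ := fun j =>
    Metric.hausdorffEdist_ne_top_of_nonempty_of_bounded (hCne j) hBne (hbdd _) (hbdd _)
  have hfin' : ∀ j, EMetric.hausdorffEdist B (C j) ≠ ⊤ := fun j => by
    have h := hfin j; unfold EMetric.hausdorffEdist at h ⊢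
    rw [Metric.hausdorffEDist_comm]; exact h
  have huc := Metric.uniformContinuous_iff.mp
    (CompactSpace.uniformContinuous_of_continuous f.continuous)
  have hucs := Metric.uniformContinuous_iff.mp
    (CompactSpace.uniformContinuous_of_continuous f.symm.continuous)
  have hnear : ∀ ε > 0, ∃ j, hausdorffDist (C j) B < ε := fun ε hε =>
    (hlim.eventually (gt_mem_nhds hε)).exists
  -- f b ∈ B for b ∈ B
  have hmemA : ∀ b ∈ B, f b ∈ B := by
    intro b hb
    have hcl : f b ∈ closure B := by
      rw [Metric.mem_closure_iff]
      intro ε hε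
      obtain ⟨η, hη, hucη⟩ := huc (ε / 2) (by linarith)
      obtain ⟨j, hj⟩ := hnear (min η (ε / 2)) (lt_min hη (by linarith))
      have hj' : hausdorffDist B (C j) < min η (ε / 2) := by rwa [hausdorffDist_comm]
      obtain ⟨c, hc, hbc⟩ := Metric.exists_dist_lt_of_hausdorffDist_lt hb hj' (hfin' j)
      have hfc : f c ∈ C j := by rw [← hCinv j]; exact mem_image_of_mem _ hc
      obtain ⟨b', hb', hfb'⟩ := Metric.exists_dist_lt_of_hausdorffDist_lt hfc hj (hfin j)
      refine ⟨b', hb', ?_⟩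
      have h1 : dist (f b) (f c) < ε / 2 := hucη (lt_of_lt_of_le hbc (min_le_left _ _))
      have h2 : dist (f c) b' < ε / 2 := lt_of_lt_of_le hfb' (min_le_right _ _)
      calc dist (f b) b' ≤ dist (f b) (f c) + dist (f c) b' := dist_triangle _ _ _
        _ < ε := by linarith
    rwa [hBc.closure_eq] at hcl
  -- f.symm b ∈ B for b ∈ B
  have hmemB : ∀ b ∈ B, f.symm b ∈ B := by
    intro b hb
    have hcl : f.symm b ∈ closure B := by
      rw [Metric.mem_closure_iff]
      intro ε hε
      obtain ⟨η, hη, hucη⟩ := hucs (ε / 2) (by linarith)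
      obtain ⟨j, hj⟩ := hnear (min η (ε / 2)) (lt_min hη (by linarith))
      have hj' : hausdorffDist B (C j) < min η (ε / 2) := by rwa [hausdorffDist_comm]
      obtain ⟨c, hc, hbc⟩ := Metric.exists_dist_lt_of_hausdorffDist_lt hb hj' (hfin' j)
      have hfc : f.symm c ∈ C j := by
        have : c ∈ ⇑f '' C j := by rw [hCinv j]; exact hc
        obtain ⟨c', hc', rfl⟩ := this
        simpa using hc'
      obtain ⟨b', hb', hfb'⟩ := Metric.exists_dist_lt_of_hausdorffDist_lt hfc hj (hfin j)
      refine ⟨b', hb', ?_⟩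
      have h1 : dist (f.symm b) (f.symm c) < ε / 2 := hucη (lt_of_lt_of_le hbc (min_le_left _ _))
      have h2 : dist (f.symm c) b' < ε / 2 := lt_of_lt_of_le hfb' (min_le_right _ _)
      calc dist (f.symm b) b' ≤ dist (f.symm b) (f.symm c) + dist (f.symm c) b' :=
            dist_triangle _ _ _
        _ < ε := by linarith
    rwa [hBc.closure_eq] at hcl
  constructor
  · apply Subset.antisymm
    · rintro _ ⟨b, hb, rfl⟩; exact hmemA b hb
    · intro b hb
      exact ⟨f.symm b, hmemB b hb, f.apply_symm_apply b⟩
  -- chain transitivity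
  intro x hx y hy δ hδ
  obtain ⟨η0, hη0, huc0⟩ := huc (δ / 4) (by linarith)
  set η := min η0 (δ / 2) with hηdef
  have hηpos : 0 < η := lt_min hη0 (by linarith)
  have hηle1 : η ≤ η0 := min_le_left _ _
  have hηle2 : η ≤ δ / 2 := min_le_right _ _
  obtain ⟨j, hj⟩ := hnear η hηpos
  have hj' : hausdorffDist B (C j) < η := by rwa [hausdorffDist_comm]
  obtain ⟨x', hx', hxx'⟩ := Metric.exists_dist_lt_of_hausdorffDist_lt hx hj' (hfin' j)
  obtain ⟨y', hy', hyy'⟩ := Metric.exists_dist_lt_of_hausdorffDist_lt hy hj' (hfin' j)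
  obtain ⟨k, hk, c, hc0, hck, hcmem, hchain⟩ := hCct j x' hx' y' hy' (δ / 4) (by linarith)
  have hdch : ∀ i : ℕ, ∃ p, p ∈ B ∧ (i ≤ k → dist (c i) p < η) := by
    intro i
    by_cases hik : i ≤ k
    · obtain ⟨p, hp, hcp⟩ := Metric.exists_dist_lt_of_hausdorffDist_lt (hcmem i hik) hj (hfin j)
      exact ⟨p, hp, fun _ => hcp⟩
    · exact ⟨y, hy, fun h => absurd h hik⟩
  choose d hdB hdclose using hdch
  set b : ℕ → X := fun i => if i = 0 then x else if i = k then y else d i with hbdef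
  have hkne : k ≠ 0 := by omega
  have hb0 : b 0 = x := by simp [hbdef]
  have hbk : b k = y := by simp [hbdef, hkne]
  have hbmem : ∀ i ≤ k, b i ∈ B := by
    intro i hik
    by_cases h0 : i = 0
    · simp [hbdef, h0]; exact hx
    · by_cases hk' : i = k
      · rw [hk', hbk]; exact hy
      · simp [hbdef, h0, hk']; exact hdB i
  have hnearb : ∀ i ≤ k, dist (c i) (b i) < η := by
    intro i hik
    by_cases h0 : i = 0
    · subst h0
      rw [hb0, hc0, dist_comm]; exact hxx'
    · by_cases hk' : i = k
      · subst hk'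
        rw [hbk, hck, dist_comm]; exact hyy'
      · have : b i = d i := by simp [hbdef, h0, hk']
        rw [this]; exact hdclose i hik
  refine ⟨k, hk, b, hb0, hbk, hbmem, ?_⟩
  intro i hik
  have h1 : dist (f (b i)) (f (c i)) < δ / 4 := by
    apply huc0
    rw [dist_comm]
    exact lt_of_lt_of_le (hnearb i (le_of_lt hik)) hηle1
  have h2 : dist (f (c i)) (c (i + 1)) ≤ δ / 4 := hchain i hik
  have h3 : dist (c (i + 1)) (b (i + 1)) < η := hnearb (i + 1) (by omega)
  calc dist (f (b i)) (b (i + 1))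
      ≤ dist (f (b i)) (f (c i)) + dist (f (c i)) (c (i + 1)) + dist (c (i + 1)) (b (i + 1)) :=
        dist_triangle4 _ _ _ _
    _ ≤ δ := by linarith
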